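/- Let Λ be a ring, J a two-sided ideal, and 0 → M →^{φ} M → Q → 0 an exact sequence of finitely generated Λ-modules with φ(J^s M) ⊆ J^{s+1} M for all s ≥ 0. Then for every k ≥ 1 and every two-sided ideal I ⊇ J^{k+1}, one has dim_𝔽 M/IM ≤ k · dim_𝔽 Q/IQ + dim_𝔽 M/(J+I)M, whenever these quotients are finite-dimensional over a central subfield 𝔽. In particular dim_𝔽 M/IM ≤ k · dim_𝔽 Q/IQ + dim_𝔽 M/JM. -/
import Mathlib


/-- The submodule `J·N` of `M`, for a (left) ideal `J` of a possibly noncommutative ring. -/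
def idealSmulSub (Λ : Type*) [Ring Λ] (M : Type*) [AddCommGroup M] [Module Λ M]
    (J : Ideal Λ) (N : Submodule Λ M) : Submodule Λ M :=
  Submodule.span Λ {x | ∃ j ∈ J, ∃ m ∈ N, x = j • m}

/-- The submodule `J^s·M`. -/
def iterSmul (Λ : Type*) [Ring Λ] (M : Type*) [AddCommGroup M] [Module Λ M]
    (J : Ideal Λ) : ℕ → Submodule Λ M
  | 0 => ⊤
  | s + 1 => idealSmulSub Λ M J (iterSmul Λ M J s)

section Aux

variable {Λ : Type*} [Ring Λ] {M : Type*} [AddCommGroup M] [Module Λ M]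
  {Q : Type*} [AddCommGroup Q] [Module Λ Q]

lemma mem_idealSmulSub_of {J : Ideal Λ} {N : Submodule Λ M} {j : Λ} (hj : j ∈ J)
    {m : M} (hm : m ∈ N) : j • m ∈ idealSmulSub Λ M J N :=
  Submodule.subset_span ⟨j, hj, m, hm, rfl⟩

/-- A `Λ`-linear map sends `I·M` into `I·Q`. -/
lemma map_mem_idealSmulSub (f : M →ₗ[Λ] Q) (I : Ideal Λ) :
    ∀ x ∈ idealSmulSub Λ M I ⊤, f x ∈ idealSmulSub Λ Q I ⊤ := by
  intro x hx
  have : idealSmulSub Λ M I ⊤ ≤ Submodule.comap f (idealSmulSub Λ Q I ⊤) := by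
    refine Submodule.span_le.mpr ?_
    rintro y ⟨j, hj, m, -, rfl⟩
    rw [SetLike.mem_coe, Submodule.mem_comap, map_smul]
    exact mem_idealSmulSub_of hj trivial
  exact this hx

/-- A surjective `Λ`-linear map sends `I·M` onto `I·Q`. -/
lemma exists_preimage_idealSmulSub (f : M →ₗ[Λ] Q) (hf : Function.Surjective f) (I : Ideal Λ) :
    ∀ q ∈ idealSmulSub Λ Q I ⊤, ∃ y ∈ idealSmulSub Λ M I ⊤, f y = q := by
  intro q hq
  have : idealSmulSub Λ Q I ⊤ ≤ Submodule.map f (idealSmulSub Λ M I ⊤) := by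
    refine Submodule.span_le.mpr ?_
    rintro y ⟨j, hj, z, -, rfl⟩
    obtain ⟨m, rfl⟩ := hf z
    exact ⟨j • m, mem_idealSmulSub_of hj trivial, map_smul f j m⟩
  obtain ⟨y, hy, hyq⟩ := this hq
  exact ⟨y, hy, hyq⟩

lemma smul_mem_span_of_iterSmul {J : Ideal Λ} (hJ2 : ∀ a ∈ J, ∀ r : Λ, a * r ∈ J) (s : ℕ)
    {m : M} (hm : m ∈ Submodule.span Λ {x | ∃ a ∈ iterSmul Λ Λ J s, ∃ n : M, x = a • n}) :
    ∀ j ∈ J, j • m ∈ Submodule.span Λ {x | ∃ a ∈ iterSmul Λ Λ J (s + 1), ∃ n : M, x = a • n} := by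
  induction hm using Submodule.span_induction with
  | mem x hx =>
    obtain ⟨a, ha, n, rfl⟩ := hx
    intro j hj
    rw [smul_smul]
    exact Submodule.subset_span ⟨j * a, mem_idealSmulSub_of hj ha, n, rfl⟩
  | zero => intro j hj; rw [smul_zero]; exact Submodule.zero_mem _
  | add x y hx hy ihx ihy =>
    intro j hj
    rw [smul_add]
    exact Submodule.add_mem _ (ihx j hj) (ihy j hj)
  | smul r x hx ih =>
    intro j hj
    rw [smul_smul]
    exact ih (j * r) (hJ2 j hj r)

lemma iterSmul_le_span {J : Ideal Λ} (hJ2 : ∀ a ∈ J, ∀ r : Λ, a * r ∈ J) (s : ℕ) :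
    iterSmul Λ M J s ≤ Submodule.span Λ {x | ∃ a ∈ iterSmul Λ Λ J s, ∃ n : M, x = a • n} := by
  induction s with
  | zero =>
    intro x _
    exact Submodule.subset_span ⟨1, Submodule.mem_top, x, (one_smul Λ x).symm⟩
  | succ s ih =>
    refine Submodule.span_le.mpr ?_
    rintro y ⟨j, hj, m, hm, rfl⟩
    exact smul_mem_span_of_iterSmul hJ2 s (ih hm) j hj

lemma iterSmul_le_idealSmulSub {J : Ideal Λ} (hJ2 : ∀ a ∈ J, ∀ r : Λ, a * r ∈ J)
    (I : Ideal Λ) (s : ℕ) (h : iterSmul Λ Λ J s ≤ (I : Submodule Λ Λ)) :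
    iterSmul Λ M J s ≤ idealSmulSub Λ M I ⊤ := by
  refine (iterSmul_le_span hJ2 s).trans (Submodule.span_le.mpr ?_)
  rintro x ⟨a, ha, n, rfl⟩
  exact mem_idealSmulSub_of (h ha) trivial

/-- Comparing dimensions via a common surjected-from module. -/
lemma finrank_le_of_factor {𝔽 : Type*} [Field 𝔽] {M X W : Type*}
    [AddCommGroup M] [Module 𝔽 M] [AddCommGroup X] [Module 𝔽 X]
    [AddCommGroup W] [Module 𝔽 W] [FiniteDimensional 𝔽 X]
    (g : M →ₗ[𝔽] W) (hg : Function.Surjective g)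
    (p : M →ₗ[𝔽] X) (hp : Function.Surjective p)
    (h : LinearMap.ker p ≤ LinearMap.ker g) :
    Module.finrank 𝔽 W ≤ Module.finrank 𝔽 X := by
  let e : (M ⧸ LinearMap.ker p) ≃ₗ[𝔽] X := p.quotKerEquivOfSurjective hp
  haveI : FiniteDimensional 𝔽 (M ⧸ LinearMap.ker p) := Module.Finite.equiv e.symm
  let σ : (M ⧸ LinearMap.ker p) →ₗ[𝔽] W := Submodule.liftQ _ g h
  have hσ : Function.Surjective σ := by
    intro w
    obtain ⟨m, rfl⟩ := hg w
    exact ⟨Submodule.Quotient.mk m, rfl⟩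
  have h1 : Module.finrank 𝔽 W = Module.finrank 𝔽 (LinearMap.range σ) := by
    rw [LinearMap.range_eq_top.mpr hσ, finrank_top]
  rw [h1, ← e.finrank_eq]
  exact σ.finrank_range_le

end Aux

/-- Let `Λ` be an `𝔽`-algebra, `J`, `I` two-sided ideals, and `0 → M →^φ M → Q → 0` an
exact sequence of `Λ`-modules with `φ(J^s M) ⊆ J^{s+1} M` for all `s`.  If `I ⊇ J^{k+1}`
then `dim_𝔽 M/IM ≤ k · dim_𝔽 Q/IQ + dim_𝔽 M/(J+I)M`. -/
theorem finrank_quotient_le_of_contracting_endomorphism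
    (𝔽 : Type*) [Field 𝔽] (Λ : Type*) [Ring Λ] [Algebra 𝔽 Λ]
    (M Q : Type*) [AddCommGroup M] [Module Λ M] [Module 𝔽 M] [IsScalarTower 𝔽 Λ M]
    [AddCommGroup Q] [Module Λ Q] [Module 𝔽 Q] [IsScalarTower 𝔽 Λ Q]
    [Module.Finite Λ M]
    (J I : Ideal Λ)
    (hJ2 : ∀ a ∈ J, ∀ r : Λ, a * r ∈ J) (hI2 : ∀ a ∈ I, ∀ r : Λ, a * r ∈ I)
    (φ : M →ₗ[Λ] M) (ψ : M →ₗ[Λ] Q)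
    (hinj : Function.Injective φ) (hψ : Function.Surjective ψ)
    (hexact : LinearMap.ker ψ = LinearMap.range φ)
    (hφJ : ∀ s : ℕ, ∀ x ∈ iterSmul Λ M J s, φ x ∈ iterSmul Λ M J (s + 1))
    (k : ℕ) (hk : 1 ≤ k)
    (hkI : iterSmul Λ Λ J (k + 1) ≤ I)
    [FiniteDimensional 𝔽 (M ⧸ idealSmulSub Λ M I ⊤)]
    [FiniteDimensional 𝔽 (Q ⧸ idealSmulSub Λ Q I ⊤)]
    [FiniteDimensional 𝔽 (M ⧸ (idealSmulSub Λ M J ⊤ ⊔ idealSmulSub Λ M I ⊤))] :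
    Module.finrank 𝔽 (M ⧸ idealSmulSub Λ M I ⊤) ≤
      k * Module.finrank 𝔽 (Q ⧸ idealSmulSub Λ Q I ⊤) +
        Module.finrank 𝔽 (M ⧸ (idealSmulSub Λ M J ⊤ ⊔ idealSmulSub Λ M I ⊤)) := by
  classical
  set NI : Submodule Λ M := idealSmulSub Λ M I ⊤ with hNI
  set NJ : Submodule Λ M := idealSmulSub Λ M J ⊤ with hNJ
  set π : M →ₗ[Λ] (M ⧸ NI) := NI.mkQ with hπ
  -- powers of φ preserve I·M
  have hpowI : ∀ i : ℕ, ∀ x ∈ NI, (φ ^ i) x ∈ NI := by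
    intro i
    induction i with
    | zero => intro x hx; simpa using hx
    | succ i ih =>
      intro x hx
      rw [pow_succ, Module.End.mul_apply]
      exact ih (φ x) (map_mem_idealSmulSub φ I x hx)
  -- powers of φ shift the J-adic filtration
  have hpowJ : ∀ i s : ℕ, ∀ x ∈ iterSmul Λ M J s, (φ ^ i) x ∈ iterSmul Λ M J (s + i) := by
    intro i
    induction i with
    | zero => intro s x hx; simpa using hx
    | succ i ih =>
      intro s x hx
      rw [pow_succ, Module.End.mul_apply]
      have := ih (s + 1) (φ x) (hφJ s x hx)
      simpa [Nat.add_assoc, Nat.add_comm 1 i] using this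
  -- the chain of images in M/IM
  set G : ℕ → Submodule 𝔽 (M ⧸ NI) :=
    fun i => LinearMap.range ((π ∘ₗ (φ ^ i)).restrictScalars 𝔽) with hG
  have hGle : ∀ i, G (i + 1) ≤ G i := by
    rintro i v ⟨m, rfl⟩
    refine ⟨φ m, ?_⟩
    simp only [LinearMap.restrictScalars_apply, LinearMap.comp_apply, pow_succ,
      Module.End.mul_apply]
  set q : ℕ := Module.finrank 𝔽 (Q ⧸ idealSmulSub Λ Q I ⊤) with hq
  -- step inequality
  have hstep : ∀ i, Module.finrank 𝔽 (G i) ≤ q + Module.finrank 𝔽 (G (i + 1)) := by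
    intro i
    set L : Submodule 𝔽 (G i) := Submodule.comap (G i).subtype (G (i + 1)) with hL
    have hLrank : Module.finrank 𝔽 L = Module.finrank 𝔽 (G (i + 1)) :=
      (Submodule.comapSubtypeEquivOfLe (hGle i)).finrank_eq
    have hsplit : Module.finrank 𝔽 ((G i) ⧸ L) + Module.finrank 𝔽 L
        = Module.finrank 𝔽 (G i) := Submodule.finrank_quotient_add_finrank L
    -- bound finrank of (G i) ⧸ L by q
    set g : M →ₗ[𝔽] ((G i) ⧸ L) :=
      L.mkQ ∘ₗ ((π ∘ₗ (φ ^ i)).restrictScalars 𝔽).rangeRestrict with hgdef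
    have hg : Function.Surjective g :=
      (Submodule.mkQ_surjective L).comp
        ((π ∘ₗ (φ ^ i)).restrictScalars 𝔽).surjective_rangeRestrict
    set X := Q ⧸ (idealSmulSub Λ Q I ⊤).restrictScalars 𝔽 with hX
    set p : M →ₗ[𝔽] X :=
      ((idealSmulSub Λ Q I ⊤).restrictScalars 𝔽).mkQ ∘ₗ (ψ.restrictScalars 𝔽) with hp
    have hpsurj : Function.Surjective p :=
      (Submodule.mkQ_surjective _).comp hψ
    haveI : FiniteDimensional 𝔽 X :=
      Module.Finite.equiv (Submodule.Quotient.restrictScalarsEquiv 𝔽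
        (idealSmulSub Λ Q I ⊤)).symm
    have hker : LinearMap.ker p ≤ LinearMap.ker g := by
      intro x hx
      have hxQ : ψ x ∈ idealSmulSub Λ Q I ⊤ := by
        have : p x = 0 := hx
        rw [hp, LinearMap.comp_apply, Submodule.mkQ_apply, Submodule.Quotient.mk_eq_zero,
          Submodule.restrictScalars_mem, LinearMap.restrictScalars_apply] at this
        exact this
      obtain ⟨y, hy, hyx⟩ := exists_preimage_idealSmulSub ψ hψ I (ψ x) hxQ
      have hxy : x - y ∈ LinearMap.ker ψ := by
        simp [LinearMap.mem_ker, map_sub, hyx]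
      rw [hexact] at hxy
      obtain ⟨z, hz⟩ := hxy
      have hxdecomp : x = φ z + y := by rw [hz]; abel
      have hkill : ∀ w : M, ((π ∘ₗ (φ ^ i)).restrictScalars 𝔽).rangeRestrict w ∈ L →
          g w = 0 := by
        intro w hw
        simp only [hgdef, LinearMap.comp_apply]
        rwa [Submodule.mkQ_apply, Submodule.Quotient.mk_eq_zero]
      have hgφz : g (φ z) = 0 := by
        refine hkill (φ z) ?_
        have : π ((φ ^ i) (φ z)) ∈ G (i + 1) := by
          refine ⟨z, ?_⟩
          simp only [LinearMap.restrictScalars_apply, LinearMap.comp_apply, pow_succ,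
            Module.End.mul_apply]
        exact this
      have hgy : g y = 0 := by
        refine hkill y ?_
        have h0 : π ((φ ^ i) y) = 0 := by
          rw [hπ, Submodule.mkQ_apply, Submodule.Quotient.mk_eq_zero]
          exact hpowI i y hy
        show (((π ∘ₗ (φ ^ i)).restrictScalars 𝔽) y : M ⧸ NI) ∈ G (i + 1)
        simp only [LinearMap.restrictScalars_apply, LinearMap.comp_apply]
        rw [h0]
        exact Submodule.zero_mem _
      have : g x = 0 := by rw [hxdecomp, map_add, hgφz, hgy, add_zero]
      exact this
    have hquot : Module.finrank 𝔽 ((G i) ⧸ L) ≤ Module.finrank 𝔽 X :=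
      finrank_le_of_factor g hg p hpsurj hker
    have hXq : Module.finrank 𝔽 X = q :=
      (Submodule.Quotient.restrictScalarsEquiv 𝔽 (idealSmulSub Λ Q I ⊤)).finrank_eq
    omega
  -- induction: finrank (M/IM) ≤ i*q + finrank (G i)
  have hmain : ∀ i, Module.finrank 𝔽 (M ⧸ NI) ≤ i * q + Module.finrank 𝔽 (G i) := by
    intro i
    induction i with
    | zero =>
      have hG0 : G 0 = ⊤ := by
        rw [eq_top_iff]
        rintro v -
        obtain ⟨m, rfl⟩ := NI.mkQ_surjective v
        exact ⟨m, by simp [hG, hπ, Submodule.mkQ_apply]⟩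
      rw [hG0]
      simp [finrank_top]
    | succ i ih =>
      calc Module.finrank 𝔽 (M ⧸ NI) ≤ i * q + Module.finrank 𝔽 (G i) := ih
        _ ≤ i * q + (q + Module.finrank 𝔽 (G (i + 1))) := by
            exact Nat.add_le_add_left (hstep i) _
        _ = (i + 1) * q + Module.finrank 𝔽 (G (i + 1)) := by ring
  -- final: bound finrank (G k)
  have hfinal : Module.finrank 𝔽 (G k) ≤ Module.finrank 𝔽 (M ⧸ (NJ ⊔ NI)) := by
    set g : M →ₗ[𝔽] (G k) := ((π ∘ₗ (φ ^ k)).restrictScalars 𝔽).rangeRestrict with hgdef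
    have hg : Function.Surjective g :=
      ((π ∘ₗ (φ ^ k)).restrictScalars 𝔽).surjective_rangeRestrict
    set X := M ⧸ (NJ ⊔ NI).restrictScalars 𝔽 with hX
    set p : M →ₗ[𝔽] X := ((NJ ⊔ NI).restrictScalars 𝔽).mkQ with hp
    haveI : FiniteDimensional 𝔽 X :=
      Module.Finite.equiv (Submodule.Quotient.restrictScalarsEquiv 𝔽 (NJ ⊔ NI)).symm
    have hker : LinearMap.ker p ≤ LinearMap.ker g := by
      intro x hx
      have hxmem : x ∈ NJ ⊔ NI := by
        have : p x = 0 := hx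
        rw [hp, Submodule.mkQ_apply, Submodule.Quotient.mk_eq_zero,
          Submodule.restrictScalars_mem] at this
        exact this
      have hkx : (φ ^ k) x ∈ NI := by
        have hsup : NJ ⊔ NI ≤ LinearMap.ker (π ∘ₗ (φ ^ k)) := by
          refine sup_le ?_ ?_
          · intro y hy
            have h1 : (φ ^ k) y ∈ iterSmul Λ M J (1 + k) := by
              refine hpowJ k 1 y ?_
              exact hy
            have h2 : iterSmul Λ M J (1 + k) ≤ NI := by
              rw [Nat.add_comm 1 k]
              exact iterSmul_le_idealSmulSub hJ2 I (k + 1) hkI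
            simp only [LinearMap.mem_ker, LinearMap.comp_apply, hπ, Submodule.mkQ_apply,
              Submodule.Quotient.mk_eq_zero]
            exact h2 h1
          · intro y hy
            simp only [LinearMap.mem_ker, LinearMap.comp_apply, hπ, Submodule.mkQ_apply,
              Submodule.Quotient.mk_eq_zero]
            exact hpowI k y hy
        have := hsup hxmem
        simpa [LinearMap.mem_ker, hπ, Submodule.Quotient.mk_eq_zero] using this
      have : g x = 0 := by
        apply Subtype.ext
        show ((π ∘ₗ (φ ^ k)).restrictScalars 𝔽) x = 0
        simp only [LinearMap.restrictScalars_apply, LinearMap.comp_apply, hπ,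
          Submodule.mkQ_apply, Submodule.Quotient.mk_eq_zero]
        exact hkx
      exact this
    have h1 : Module.finrank 𝔽 (G k) ≤ Module.finrank 𝔽 X :=
      finrank_le_of_factor g hg p (Submodule.mkQ_surjective _) hker
    have h2 : Module.finrank 𝔽 X = Module.finrank 𝔽 (M ⧸ (NJ ⊔ NI)) :=
      (Submodule.Quotient.restrictScalarsEquiv 𝔽 (NJ ⊔ NI)).finrank_eq
    omega
  calc Module.finrank 𝔽 (M ⧸ NI) ≤ k * q + Module.finrank 𝔽 (G k) := hmain k
    _ ≤ k * q + Module.finrank 𝔽 (M ⧸ (NJ ⊔ NI)) := Nat.add_le_add_left hfinal _
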